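/- Let f be a continuous map of a metric space M, ω ∈ ℝ^d a nonresonant vector (i.e., k·ω ∉ ℤ for all nonzero k ∈ ℤ^d), and T_ω(θ) = θ + ω the rotation on the torus T^d. If K₁, K₂ : T^d → M are continuous maps satisfying f ∘ Kᵢ = Kᵢ ∘ T_ω for i = 1,2, and the ranges of K₁ and K₂ intersect, then there exists σ ∈ ℝ^d such that K₁ = K₂ ∘ T_σ. -/

import Mathlib

/-- The rotation of the torus `T^d = (ℝ/ℤ)^d` by the vector `ω ∈ ℝ^d`. -/
noncomputable def torusRot (d : ℕ) (ω : Fin d → ℝ) : Fin d → AddCircle (1 : ℝ) :=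
  fun i => (ω i : AddCircle (1 : ℝ))

namespace TorusAux

open AddCircle Complex MeasureTheory Finset Set Filter

variable {d : ℕ}

instance : IsProbabilityMeasure (volume : Measure (AddCircle (1 : ℝ))) :=
  ⟨by rw [AddCircle.measure_univ]; norm_num⟩

/-- The character of the torus associated to `k : Fin d → ℤ`. -/
noncomputable def chi (k : Fin d → ℤ) : C((Fin d → AddCircle (1 : ℝ)), ℂ) :=
  ⟨fun θ => ∏ i, fourier (k i) (θ i),
   continuous_finset_prod _ fun i _ =>
     (map_continuous (fourier (k i))).comp (continuous_apply i)⟩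

lemma chi_apply (k : Fin d → ℤ) (θ : Fin d → AddCircle (1 : ℝ)) :
    chi k θ = ∏ i, fourier (k i) (θ i) := rfl

lemma chi_add (k : Fin d → ℤ) (θ η : Fin d → AddCircle (1 : ℝ)) :
    chi k (θ + η) = chi k θ * chi k η := by
  simp only [chi_apply, ← Finset.prod_mul_distrib]
  refine Finset.prod_congr rfl fun i _ => ?_
  have h : (θ + η) i = θ i + η i := rfl
  rw [h, fourier_apply, fourier_apply, fourier_apply, smul_add, AddCircle.toCircle_add]
  push_cast
  ring

lemma chi_zero (θ : Fin d → AddCircle (1 : ℝ)) : chi 0 θ = 1 := by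
  simp [chi_apply, fourier_zero]

lemma chi_nsmul (k : Fin d → ℤ) (θ : Fin d → AddCircle (1 : ℝ)) (n : ℕ) :
    chi k (n • θ) = (chi k θ) ^ n := by
  induction n with
  | zero =>
    simp only [zero_smul, pow_zero, chi_apply]
    simp [fourier_eval_zero]
  | succ n ih => rw [succ_nsmul, chi_add, ih, pow_succ]

lemma norm_chi (k : Fin d → ℤ) (θ : Fin d → AddCircle (1 : ℝ)) : ‖chi k θ‖ = 1 := by
  rw [chi_apply, norm_prod]
  refine Finset.prod_eq_one fun i _ => ?_
  rw [fourier_apply]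
  exact Circle.norm_coe _

lemma chi_coe (k : Fin d → ℤ) (x : Fin d → ℝ) :
    chi k (fun i => (x i : AddCircle (1 : ℝ)))
      = Complex.exp ((2 * Real.pi * Complex.I) * (∑ i, (k i : ℝ) * x i)) := by
  rw [chi_apply]
  have h : ∀ i, (fourier (k i) ((x i : ℝ) : AddCircle (1 : ℝ)) : ℂ)
      = Complex.exp ((2 * Real.pi * Complex.I) * ((k i : ℝ) * x i)) := by
    intro i
    rw [fourier_coe_apply]
    push_cast
    ring_nf
  simp_rw [h, ← Complex.exp_sum, ← Finset.mul_sum]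
  push_cast
  ring_nf

lemma integral_fourier_eq_zero {n : ℤ} (hn : n ≠ 0) :
    ∫ x : AddCircle (1 : ℝ), (fourier n x : ℂ) = 0 := by
  rw [← AddCircle.intervalIntegral_preimage (1 : ℝ) 0 (fun x => (fourier n x : ℂ))]
  have h : ∀ x : ℝ, (fourier n ((x : ℝ) : AddCircle (1 : ℝ)) : ℂ)
      = Complex.exp ((2 * Real.pi * Complex.I * n) * x) := by
    intro x
    rw [fourier_coe_apply]
    push_cast
    ring_nf
  simp_rw [h]
  have hc : (2 * Real.pi * Complex.I * n : ℂ) ≠ 0 := by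
    simp [Real.pi_ne_zero, Complex.I_ne_zero, hn]
  rw [integral_exp_mul_complex hc]
  push_cast
  rw [zero_add, mul_one, mul_zero, Complex.exp_zero]
  have h1 : Complex.exp (2 * (Real.pi : ℂ) * Complex.I * n) = 1 := by
    have := Complex.exp_int_mul_two_pi_mul_I n
    rw [← this]
    ring_nf
  rw [h1, sub_self, zero_div]

lemma integral_chi {k : Fin d → ℤ} (hk : k ≠ 0) :
    ∫ θ : Fin d → AddCircle (1 : ℝ), chi k θ = 0 := by
  have : ∫ θ : Fin d → AddCircle (1 : ℝ), chi k θ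
      = ∏ i, ∫ x : AddCircle (1 : ℝ), (fourier (k i) x : ℂ) := by
    simpa [chi_apply, volume_pi] using
      MeasureTheory.integral_fintype_prod_eq_prod
        (fun i (x : AddCircle (1 : ℝ)) => (fourier (k i) x : ℂ))
  rw [this]
  obtain ⟨i, hi⟩ : ∃ i, k i ≠ 0 := by
    by_contra h
    push_neg at h
    exact hk (funext h)
  exact Finset.prod_eq_zero (Finset.mem_univ i) (integral_fourier_eq_zero hi)

lemma chi_neg (k : Fin d → ℤ) (θ : Fin d → AddCircle (1 : ℝ)) :
    chi (-k) θ = (starRingEnd ℂ) (chi k θ) := by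
  rw [chi_apply, chi_apply, map_prod]
  refine Finset.prod_congr rfl fun i _ => ?_
  have h : (-k) i = -(k i) := rfl
  rw [h]
  exact fourier_neg

lemma chi_mul (k l : Fin d → ℤ) (θ : Fin d → AddCircle (1 : ℝ)) :
    chi (k + l) θ = chi k θ * chi l θ := by
  simp only [chi_apply, ← Finset.prod_mul_distrib]
  refine Finset.prod_congr rfl fun i _ => ?_
  have h : (k + l) i = k i + l i := rfl
  rw [h]
  exact fourier_add

/-- The star subalgebra generated by the characters. -/
noncomputable def chiSubalgebra (d : ℕ) :
    StarSubalgebra ℂ C((Fin d → AddCircle (1 : ℝ)), ℂ) where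
  toSubalgebra := Algebra.adjoin ℂ (Set.range (chi (d := d)))
  star_mem' := by
    show Algebra.adjoin ℂ (Set.range (chi (d := d))) ≤
      star (Algebra.adjoin ℂ (Set.range (chi (d := d))))
    refine Algebra.adjoin_le ?_
    rintro - ⟨k, rfl⟩
    exact Algebra.subset_adjoin ⟨-k, ContinuousMap.ext fun θ => chi_neg k θ⟩

lemma chiSubalgebra_coe :
    Subalgebra.toSubmodule (chiSubalgebra d).toSubalgebra
      = Submodule.span ℂ (Set.range (chi (d := d))) := by
  apply Algebra.adjoin_eq_span_of_subset
  refine Set.Subset.trans ?_ Submodule.subset_span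
  intro x hx
  refine Submonoid.closure_induction (fun _ => id) ⟨0, ?_⟩ ?_ hx
  · exact ContinuousMap.ext fun θ => chi_zero θ
  · rintro - - - - ⟨k, rfl⟩ ⟨l, rfl⟩
    exact ⟨k + l, ContinuousMap.ext fun θ => chi_mul k l θ⟩

lemma chiSubalgebra_separatesPoints : (chiSubalgebra d).SeparatesPoints := by
  intro θ η hne
  obtain ⟨i, hi⟩ : ∃ i, θ i ≠ η i := by
    by_contra h; push_neg at h; exact hne (funext h)
  refine ⟨_, ⟨chi (Pi.single i 1), Algebra.subset_adjoin ⟨Pi.single i 1, rfl⟩, rfl⟩, ?_⟩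
  have hval : ∀ ξ : Fin d → AddCircle (1 : ℝ), chi (Pi.single i 1) ξ = fourier 1 (ξ i) := by
    intro ξ
    rw [chi_apply]
    rw [Finset.prod_eq_single i (fun j _ hj => by
      rw [Pi.single_eq_of_ne hj]; exact fourier_zero) (fun h => absurd (Finset.mem_univ i) h)]
    rw [Pi.single_eq_same]
  dsimp only
  rw [hval, hval, fourier_one, fourier_one]
  intro h
  rw [Circle.coe_inj] at h
  exact hi (injective_toCircle one_ne_zero h)

lemma chiSubalgebra_closure_eq_top : (chiSubalgebra d).topologicalClosure = ⊤ :=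
  ContinuousMap.starSubalgebra_topologicalClosure_eq_top_of_separatesPoints _
    chiSubalgebra_separatesPoints

lemma span_chi_closure_eq_top :
    (Submodule.span ℂ (Set.range (chi (d := d)))).topologicalClosure = ⊤ := by
  rw [← chiSubalgebra_coe]
  exact congr_arg (Subalgebra.toSubmodule <| StarSubalgebra.toSubalgebra ·)
    chiSubalgebra_closure_eq_top

section Birkhoff

variable (v θ₀ : Fin d → AddCircle (1 : ℝ))

/-- Birkhoff average of `g` along the orbit of `θ₀` under translation by `v`. -/
noncomputable def birk (g : C((Fin d → AddCircle (1 : ℝ)), ℂ)) (N : ℕ) : ℂ :=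
  (N : ℂ)⁻¹ * ∑ j ∈ Finset.range N, g (θ₀ + j • v)

lemma cmap_integrable (g : C((Fin d → AddCircle (1 : ℝ)), ℂ)) :
    Integrable g (volume : Measure (Fin d → AddCircle (1 : ℝ))) :=
  g.continuous.integrable_of_hasCompactSupport (isClosed_tsupport _).isCompact

lemma birk_chi_tendsto (hv : ∀ k : Fin d → ℤ, k ≠ 0 → chi k v ≠ 1) (k : Fin d → ℤ) :
    Filter.Tendsto (birk v θ₀ (chi k)) Filter.atTop (nhds (∫ θ, chi k θ)) := by
  rcases eq_or_ne k 0 with rfl | hk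
  · have hval : ∀ N : ℕ, 1 ≤ N → birk v θ₀ (chi 0) N = 1 := by
      intro N hN
      simp only [birk, chi_zero, Finset.sum_const, Finset.card_range, nsmul_eq_mul, mul_one]
      rw [inv_mul_cancel₀]
      exact_mod_cast Nat.cast_ne_zero.mpr (by omega)
    have hint : (∫ θ : Fin d → AddCircle (1 : ℝ), chi 0 θ) = 1 := by
      simp only [chi_zero]
      simp [integral_const, measure_univ]
    rw [hint]
    refine Filter.Tendsto.congr' ?_ tendsto_const_nhds
    filter_upwards [Filter.eventually_ge_atTop 1] with N hN
    exact (hval N hN).symm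
  · rw [integral_chi hk]
    set lam : ℂ := chi k v with hlam
    have hl1 : lam ≠ 1 := hv k hk
    have hnorm : ‖lam‖ = 1 := norm_chi k v
    have hgeo : ∀ N : ℕ, birk v θ₀ (chi k) N
        = (N : ℂ)⁻¹ * (chi k θ₀ * ((lam ^ N - 1) / (lam - 1))) := by
      intro N
      rw [birk]
      congr 1
      rw [← geom_sum_eq hl1, Finset.mul_sum]
      refine Finset.sum_congr rfl fun j _ => ?_
      rw [chi_add, chi_nsmul]
    have hbound : ∀ N : ℕ, ‖birk v θ₀ (chi k) N‖ ≤ (2 / ‖lam - 1‖) * (N : ℝ)⁻¹ := by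
      intro N
      rw [hgeo N, norm_mul, norm_mul, norm_div, norm_chi, norm_inv, norm_natCast]
      rw [one_mul]
      have h2 : ‖lam ^ N - 1‖ ≤ 2 := by
        calc ‖lam ^ N - 1‖ ≤ ‖lam ^ N‖ + ‖(1 : ℂ)‖ := norm_sub_le _ _
        _ = 2 := by rw [norm_pow, hnorm, one_pow, norm_one]; norm_num
      have hpos : 0 < ‖lam - 1‖ := norm_pos_iff.2 (sub_ne_zero.2 hl1)
      rw [mul_comm]
      refine mul_le_mul_of_nonneg_right ?_ (inv_nonneg.2 (Nat.cast_nonneg N))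
      exact (div_le_div_iff_of_pos_right hpos).2 h2
    have h0 : Filter.Tendsto (fun N : ℕ => (2 / ‖lam - 1‖) * (N : ℝ)⁻¹)
        Filter.atTop (nhds 0) := by
      have := tendsto_const_nhds (x := 2 / ‖lam - 1‖) (f := Filter.atTop (α := ℕ))
        |>.mul tendsto_inv_atTop_nhds_zero_nat
      simpa using this
    exact squeeze_zero_norm hbound h0

lemma birk_dist_le (g p : C((Fin d → AddCircle (1 : ℝ)), ℂ)) (N : ℕ) :
    dist (birk v θ₀ g N) (birk v θ₀ p N) ≤ dist g p := by
  rw [dist_eq_norm, birk, birk, ← mul_sub, ← Finset.sum_sub_distrib, norm_mul, norm_inv,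
    norm_natCast]
  rcases Nat.eq_zero_or_pos N with rfl | hN
  · simpa using dist_nonneg
  calc (N : ℝ)⁻¹ * ‖∑ j ∈ Finset.range N, (g (θ₀ + j • v) - p (θ₀ + j • v))‖
      ≤ (N : ℝ)⁻¹ * ∑ j ∈ Finset.range N, ‖g (θ₀ + j • v) - p (θ₀ + j • v)‖ := by
        gcongr
        exact norm_sum_le _ _
    _ ≤ (N : ℝ)⁻¹ * ∑ j ∈ Finset.range N, dist g p := by
        gcongr with j hj
        rw [← dist_eq_norm]
        exact ContinuousMap.dist_apply_le_dist _
    _ = dist g p := by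
        rw [Finset.sum_const, Finset.card_range, nsmul_eq_mul, ← mul_assoc,
          inv_mul_cancel₀ (by exact_mod_cast hN.ne'), one_mul]

lemma integral_dist_le (g p : C((Fin d → AddCircle (1 : ℝ)), ℂ)) :
    dist (∫ θ, g θ) (∫ θ, p θ) ≤ dist g p := by
  rw [dist_eq_norm, ← integral_sub (cmap_integrable g) (cmap_integrable p)]
  have h := norm_integral_le_of_norm_le_const (C := dist g p)
    (f := fun θ => g θ - p θ) (μ := volume) ?_
  · simpa [measure_univ] using h
  · filter_upwards with θ
    rw [← dist_eq_norm]
    exact ContinuousMap.dist_apply_le_dist _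

lemma birk_tendsto (hv : ∀ k : Fin d → ℤ, k ≠ 0 → chi k v ≠ 1)
    (g : C((Fin d → AddCircle (1 : ℝ)), ℂ)) :
    Filter.Tendsto (birk v θ₀ g) Filter.atTop (nhds (∫ θ, g θ)) := by
  have hspan : ∀ p ∈ Submodule.span ℂ (Set.range (chi (d := d))),
      Filter.Tendsto (birk v θ₀ p) Filter.atTop (nhds (∫ θ, p θ)) := by
    intro p hp
    refine Submodule.span_induction ?_ ?_ ?_ ?_ hp
    · rintro - ⟨k, rfl⟩
      exact birk_chi_tendsto v θ₀ hv k
    · have : birk v θ₀ 0 = fun _ => 0 := by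
        funext N
        simp [birk]
      rw [this]
      simpa using tendsto_const_nhds
    · intro p q hp hq hP hQ
      have h1 : birk v θ₀ (p + q) = fun N => birk v θ₀ p N + birk v θ₀ q N := by
        funext N
        simp only [birk, ContinuousMap.add_apply, Finset.sum_add_distrib, mul_add]
      have h2 : (∫ θ, (p + q) θ) = (∫ θ, p θ) + ∫ θ, q θ := by
        simp only [ContinuousMap.add_apply]
        exact integral_add (cmap_integrable p) (cmap_integrable q)
      rw [h1, h2]
      exact hP.add hQ
    · intro c p hp hP
      have h1 : birk v θ₀ (c • p) = fun N => c * birk v θ₀ p N := by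
        funext N
        simp only [birk, ContinuousMap.smul_apply, smul_eq_mul, ← Finset.mul_sum]
        ring
      have h2 : (∫ θ, (c • p) θ) = c * ∫ θ, p θ := by
        simp only [ContinuousMap.smul_apply]
        rw [integral_smul]
        simp
      rw [h1, h2]
      exact (tendsto_const_nhds.mul hP)
  rw [Metric.tendsto_atTop]
  intro ε hε
  have hg : g ∈ closure ((Submodule.span ℂ (Set.range (chi (d := d)))) : Set _) := by
    have := span_chi_closure_eq_top (d := d)
    have h2 : g ∈ (Submodule.span ℂ (Set.range (chi (d := d)))).topologicalClosure := by
      rw [this]; trivial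
    exact h2
  obtain ⟨p, hpmem, hpd⟩ := Metric.mem_closure_iff.1 hg (ε / 3) (by linarith)
  obtain ⟨N₀, hN₀⟩ := (Metric.tendsto_atTop.1 (hspan p hpmem)) (ε / 3) (by linarith)
  refine ⟨N₀, fun N hN => ?_⟩
  have h1 : dist (birk v θ₀ g N) (birk v θ₀ p N) ≤ dist g p := birk_dist_le v θ₀ g p N
  have h2 : dist (∫ θ, p θ) (∫ θ, g θ) ≤ dist g p := by
    rw [dist_comm]
    exact integral_dist_le g p
  calc dist (birk v θ₀ g N) (∫ θ, g θ)
      ≤ dist (birk v θ₀ g N) (birk v θ₀ p N) + dist (birk v θ₀ p N) (∫ θ, p θ)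
        + dist (∫ θ, p θ) (∫ θ, g θ) := dist_triangle4 _ _ _ _
    _ < ε / 3 + ε / 3 + ε / 3 := by
        have := hN₀ N hN
        have h3 := h1.trans_lt hpd
        have h4 := h2.trans_lt hpd
        linarith
    _ = ε := by ring

end Birkhoff

/-- Kronecker's theorem: orbits of a nonresonant translation are dense. -/
lemma dense_orbit (ω : Fin d → ℝ)
    (hnr : ∀ k : Fin d → ℤ, k ≠ 0 → ∀ m : ℤ, (∑ i, (k i : ℝ) * ω i) ≠ (m : ℝ))
    (θ₀ : Fin d → AddCircle (1 : ℝ)) :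
    Dense (Set.range fun n : ℕ => θ₀ + n • torusRot d ω) := by
  have hv : ∀ k : Fin d → ℤ, k ≠ 0 → chi k (torusRot d ω) ≠ 1 := by
    intro k hk h1
    have heq : chi k (torusRot d ω)
        = Complex.exp ((2 * Real.pi * Complex.I) * (∑ i, (k i : ℝ) * ω i)) := chi_coe k ω
    rw [heq, Complex.exp_eq_one_iff] at h1
    obtain ⟨m, hm⟩ := h1
    apply hnr k hk m
    have hne : (2 * (Real.pi : ℂ) * Complex.I) ≠ 0 := by
      simp [Real.pi_ne_zero, Complex.I_ne_zero]
    have h2 : ((∑ i, (k i : ℝ) * ω i : ℝ) : ℂ) = (m : ℂ) := by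
      apply mul_left_cancel₀ hne
      rw [hm]
      ring
    exact_mod_cast h2
  rw [dense_iff_closure_eq]
  by_contra hne
  obtain ⟨x, hx⟩ : ∃ x, x ∉ closure (Set.range fun n : ℕ => θ₀ + n • torusRot d ω) := by
    by_contra h
    push_neg at h
    exact hne (Set.eq_univ_iff_forall.2 h)
  obtain ⟨g, hg0, hg1, hg01⟩ := exists_continuous_zero_one_of_isClosed
    (isClosed_closure (s := Set.range fun n : ℕ => θ₀ + n • torusRot d ω))
    (isClosed_singleton (x := x)) (by simp [Set.disjoint_singleton_right, hx])
  set gc : C((Fin d → AddCircle (1 : ℝ)), ℂ) :=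
    ⟨fun y => (g y : ℂ), Complex.continuous_ofReal.comp g.continuous⟩ with hgc
  have hzero : ∀ N, birk (torusRot d ω) θ₀ gc N = 0 := by
    intro N
    rw [birk]
    have : ∀ j ∈ Finset.range N, gc (θ₀ + j • torusRot d ω) = 0 := by
      intro j _
      have hmem : θ₀ + j • torusRot d ω
          ∈ closure (Set.range fun n : ℕ => θ₀ + n • torusRot d ω) :=
        subset_closure ⟨j, rfl⟩
      have := hg0 hmem
      simp only [hgc, ContinuousMap.coe_mk]
      rw [show g (θ₀ + j • torusRot d ω) = 0 from this]
      simp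
    rw [Finset.sum_eq_zero this, mul_zero]
  have hlim := birk_tendsto (torusRot d ω) θ₀ hv gc
  have hint : (∫ θ, gc θ) = 0 := by
    refine tendsto_nhds_unique hlim ?_
    rw [show (birk (torusRot d ω) θ₀ gc) = fun _ => (0 : ℂ) from funext hzero]
    exact tendsto_const_nhds
  have hgint : Integrable (⇑g) (volume : Measure (Fin d → AddCircle (1 : ℝ))) :=
    g.continuous.integrable_of_hasCompactSupport (isClosed_tsupport _).isCompact
  have hintg : (∫ θ, g θ) = 0 := by
    have : (∫ θ, gc θ) = ((∫ θ, g θ : ℝ) : ℂ) := by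
      simp only [hgc, ContinuousMap.coe_mk]
      exact integral_ofReal
    rw [this] at hint
    exact_mod_cast hint
  have hnn : 0 ≤ (g : (Fin d → AddCircle (1 : ℝ)) → ℝ) := fun y => (hg01 y).1
  have hae : (g : (Fin d → AddCircle (1 : ℝ)) → ℝ) =ᵐ[volume] 0 :=
    (integral_eq_zero_iff_of_nonneg hnn hgint).1 hintg
  have hgzero : (g : (Fin d → AddCircle (1 : ℝ)) → ℝ) = 0 :=
    (Continuous.ae_eq_iff_eq volume g.continuous continuous_const).1 hae
  have : g x = 1 := hg1 rfl
  rw [show g x = 0 from congrFun hgzero x] at this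
  norm_num at this

end TorusAux

theorem semiconjugacy_unique_up_to_translation
    {d : ℕ} {M : Type*} [MetricSpace M]
    (f : M → M) (hf : Continuous f)
    (ω : Fin d → ℝ)
    (hnr : ∀ k : Fin d → ℤ, k ≠ 0 → ∀ m : ℤ, (∑ i, (k i : ℝ) * ω i) ≠ (m : ℝ))
    (K₁ K₂ : (Fin d → AddCircle (1 : ℝ)) → M)
    (hK₁ : Continuous K₁) (hK₂ : Continuous K₂)
    (hinv₁ : ∀ θ, f (K₁ θ) = K₁ (θ + torusRot d ω))
    (hinv₂ : ∀ θ, f (K₂ θ) = K₂ (θ + torusRot d ω))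
    (hmeet : ∃ θ₁ θ₂, K₁ θ₁ = K₂ θ₂) :
    ∃ σ : Fin d → ℝ, ∀ θ, K₁ θ = K₂ (θ + torusRot d σ) := by
  obtain ⟨θ₁, θ₂, hθ⟩ := hmeet
  have hlift : ∀ i, ∃ x : ℝ, (x : AddCircle (1 : ℝ)) = (θ₂ - θ₁) i := fun i =>
    QuotientAddGroup.mk_surjective ((θ₂ - θ₁) i)
  choose σ hσ using hlift
  have hσ' : torusRot d σ = θ₂ - θ₁ := funext fun i => hσ i
  refine ⟨σ, ?_⟩
  rw [hσ']
  -- the set where the two semiconjugacies (after translation) agree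
  set A : Set (Fin d → AddCircle (1 : ℝ)) := {θ | K₁ θ = K₂ (θ + (θ₂ - θ₁))} with hA
  have hAclosed : IsClosed A :=
    isClosed_eq hK₁ (hK₂.comp (continuous_id.add continuous_const))
  have hAstep : ∀ θ ∈ A, θ + torusRot d ω ∈ A := by
    intro θ hθA
    have : K₁ (θ + torusRot d ω) = K₂ (θ + (θ₂ - θ₁) + torusRot d ω) := by
      rw [← hinv₁, ← hinv₂, hθA]
    simpa [hA, Set.mem_setOf_eq, add_right_comm] using this
  have hAorbit : ∀ n : ℕ, θ₁ + n • torusRot d ω ∈ A := by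
    intro n
    induction n with
    | zero =>
      simp only [zero_smul, add_zero, hA, Set.mem_setOf_eq]
      rw [add_sub_cancel]
      exact hθ
    | succ n ih =>
      have := hAstep _ ih
      simpa [succ_nsmul, add_assoc] using this
  have hdense := TorusAux.dense_orbit ω hnr θ₁
  have hsub : Set.range (fun n : ℕ => θ₁ + n • torusRot d ω) ⊆ A := by
    rintro - ⟨n, rfl⟩
    exact hAorbit n
  have hAuniv : A = Set.univ := by
    apply Set.eq_univ_of_univ_subset
    calc Set.univ = closure (Set.range fun n : ℕ => θ₁ + n • torusRot d ω) :=
          (dense_iff_closure_eq.1 hdense).symm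
      _ ⊆ closure A := closure_mono hsub
      _ = A := hAclosed.closure_eq
  intro θ
  have : θ ∈ A := hAuniv ▸ Set.mem_univ θ
  exact this
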